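/- Let ε > 0 and suppose h ∈ ℂ^k satisfies |h_i| < ε for all i, and A ∈ GL(k+1,ℂ) has (1,1)-entry 1 and ‖A − Id‖ < ε. If ε is small enough (depending only on k), then the normalized map Ḡ_h(A) = (1 + Σ_{i=2}^{k+1} a_{1,i} h_{i-1})^{-1} A G_h satisfies ‖Ḡ_h(A) − Id‖ ≤ C(‖A − Id‖ + ‖h‖) for a constant C depending only on k. -/

import Mathlib

open Matrix
open scoped Matrix.Norms.L2Operator

/-- The shear matrix `G_h`: 1's on the diagonal, first column `(1, h_1, …, h_k)ᵀ`,
zeros elsewhere. -/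
def Gmat (k : ℕ) (h : Fin k → ℂ) : Matrix (Fin (k + 1)) (Fin (k + 1)) ℂ :=
  Matrix.of fun i j =>
    if i = j then 1 else if j = 0 then (if hi : i = 0 then 0 else h (i.pred hi)) else 0

section aux
variable {m n : Type*} [Fintype m] [Fintype n] [DecidableEq n]

lemma euc_coord_le (x : EuclideanSpace ℂ m) (i : m) : ‖x i‖ ≤ ‖x‖ := by
  rw [EuclideanSpace.norm_eq]
  rw [show ‖x i‖ = Real.sqrt (‖x i‖ ^ 2) from (Real.sqrt_sq (norm_nonneg _)).symm]
  exact Real.sqrt_le_sqrt <|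
    Finset.single_le_sum (f := fun j => ‖x j‖ ^ 2) (fun j _ => sq_nonneg _) (Finset.mem_univ i)

lemma euc_norm_le_sum (x : EuclideanSpace ℂ m) : ‖x‖ ≤ ∑ i, ‖x i‖ := by
  rw [EuclideanSpace.norm_eq]
  calc Real.sqrt (∑ i, ‖x i‖ ^ 2) ≤ Real.sqrt ((∑ i, ‖x i‖) ^ 2) :=
        Real.sqrt_le_sqrt (Finset.sum_sq_le_sq_sum_of_nonneg fun i _ => norm_nonneg _)
    _ = ∑ i, ‖x i‖ := Real.sqrt_sq (Finset.sum_nonneg fun i _ => norm_nonneg _)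

lemma l2_entry_le (A : Matrix m n ℂ) (i : m) (j : n) : ‖A i j‖ ≤ ‖A‖ := by
  have h := A.l2_opNorm_mulVec (EuclideanSpace.single j (1 : ℂ))
  rw [EuclideanSpace.norm_single, norm_one, mul_one] at h
  refine le_trans ?_ h
  have hx : ((EuclideanSpace.equiv m ℂ).symm (A *ᵥ (EuclideanSpace.single j (1 : ℂ)))) i
      = A i j := by
    show (A *ᵥ (Pi.single j 1)) i = A i j
    simp
  rw [← hx]
  exact euc_coord_le _ i

lemma l2_norm_le_sum (A : Matrix m n ℂ) : ‖A‖ ≤ ∑ i, ∑ j, ‖A i j‖ := by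
  rw [Matrix.l2_opNorm_def]
  refine ContinuousLinearMap.opNorm_le_bound _
    (Finset.sum_nonneg fun i _ => Finset.sum_nonneg fun j _ => norm_nonneg _) fun x => ?_
  have happ : ((Matrix.toEuclideanLin.trans LinearMap.toContinuousLinearMap A) x :
      EuclideanSpace ℂ m) = (WithLp.equiv 2 (m → ℂ)).symm (A *ᵥ (WithLp.equiv 2 (n → ℂ)) x) := rfl
  rw [happ]
  calc ‖(WithLp.equiv 2 (m → ℂ)).symm (A *ᵥ (WithLp.equiv 2 (n → ℂ)) x)‖
      ≤ ∑ i, ‖((WithLp.equiv 2 (m → ℂ)).symm (A *ᵥ (WithLp.equiv 2 (n → ℂ)) x)) i‖ :=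
        euc_norm_le_sum _
    _ ≤ ∑ i, (∑ j, ‖A i j‖) * ‖x‖ := by
        refine Finset.sum_le_sum fun i _ => ?_
        show ‖(A *ᵥ (WithLp.equiv 2 (n → ℂ)) x) i‖ ≤ _
        rw [Matrix.mulVec, dotProduct]
        calc ‖∑ j, A i j * ((WithLp.equiv 2 (n → ℂ)) x) j‖
            ≤ ∑ j, ‖A i j * ((WithLp.equiv 2 (n → ℂ)) x) j‖ := norm_sum_le _ _
          _ ≤ ∑ j, ‖A i j‖ * ‖x‖ := by
              refine Finset.sum_le_sum fun j _ => ?_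
              rw [norm_mul]
              exact mul_le_mul_of_nonneg_left (euc_coord_le x j) (norm_nonneg _)
          _ = (∑ j, ‖A i j‖) * ‖x‖ := by rw [Finset.sum_mul]
    _ = (∑ i, ∑ j, ‖A i j‖) * ‖x‖ := by rw [Finset.sum_mul]

end aux

set_option maxHeartbeats 2000000 in
/-- For `ε` small enough (depending only on `k`), whenever `|h_i| < ε` for all `i` and
`A ∈ GL(k+1,ℂ)` has `(1,1)`-entry `1` and `‖A − Id‖ < ε`, the normalized map
`Ḡ_h(A) = (1 + Σ a_{1,i} h_{i-1})⁻¹ • (A · G_h)` satisfies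
`‖Ḡ_h(A) − Id‖ ≤ C (‖A − Id‖ + ‖h‖)` for a constant `C` depending only on `k`. -/
theorem normalized_shear_close_to_id (k : ℕ) :
    ∃ ε > (0 : ℝ), ∃ C > (0 : ℝ),
      ∀ h : EuclideanSpace ℂ (Fin k), (∀ i, ‖h i‖ < ε) →
        ∀ A : Matrix (Fin (k + 1)) (Fin (k + 1)) ℂ, IsUnit A → A 0 0 = 1 → ‖A - 1‖ < ε →
          ‖(1 + ∑ i : Fin k, A 0 i.succ * h i)⁻¹ • (A * Gmat k h) - 1‖ ≤
            C * (‖A - 1‖ + ‖h‖) := by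
  set c : ℝ := (k : ℝ) + 1 with hc_def
  have hc : (1 : ℝ) ≤ c := by
    rw [hc_def]; linarith [Nat.cast_nonneg (α := ℝ) k]
  have hc0 : (0 : ℝ) ≤ c := le_trans zero_le_one hc
  have hkc : (k : ℝ) ≤ c := by simp [hc_def]
  refine ⟨1 / (2 * c), by positivity, 6 * c ^ 2, by positivity, fun h hh A _ _ hA => ?_⟩
  set ε : ℝ := 1 / (2 * c) with hε_def
  have hεpos : 0 < ε := by positivity
  have hεc : ε * (2 * c) = 1 := by
    rw [hε_def]; field_simp
  set r : ℝ := ‖A - 1‖ with hr_def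
  set t : ℝ := ‖h‖ with ht_def
  have hr0 : 0 ≤ r := norm_nonneg _
  have ht0 : 0 ≤ t := norm_nonneg _
  -- t ≤ 1/2
  have hkε : (k : ℝ) * ε ≤ 1 / 2 := by nlinarith
  have ht2 : t ≤ 1 / 2 := by
    have h1 : t ≤ ∑ i : Fin k, ‖h i‖ := euc_norm_le_sum h
    have h2 : ∑ i : Fin k, ‖h i‖ ≤ ∑ _i : Fin k, ε :=
      Finset.sum_le_sum fun i _ => by
        exact (hh i).le
    rw [Finset.sum_const, Finset.card_univ, Fintype.card_fin, nsmul_eq_mul] at h2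
    linarith
  have hεhalf : ε ≤ 1 / 2 := by nlinarith
  have hrε : r < ε := hA
  -- coordinates of h
  have hht : ∀ i : Fin k, ‖h i‖ ≤ t := fun i => euc_coord_le h i
  -- entries of A in the first row
  have hAentry : ∀ i : Fin k, ‖A 0 i.succ‖ ≤ r := by
    intro i
    have he : A 0 i.succ = (A - 1) 0 i.succ := by
      rw [Matrix.sub_apply, Matrix.one_apply_ne (Fin.succ_ne_zero i).symm, sub_zero]
    rw [he]
    exact l2_entry_le _ _ _
  set s : ℂ := ∑ i : Fin k, A 0 i.succ * h i with hs_def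
  have hs : ‖s‖ ≤ (k : ℝ) * r * t := by
    calc ‖s‖ ≤ ∑ i : Fin k, ‖A 0 i.succ * h i‖ := norm_sum_le _ _
      _ ≤ ∑ _i : Fin k, r * t := Finset.sum_le_sum fun i _ => by
          rw [norm_mul]
          exact mul_le_mul (hAentry i) (hht i) (norm_nonneg _) hr0
      _ = (k : ℝ) * r * t := by
          rw [Finset.sum_const, Finset.card_univ, Fintype.card_fin, nsmul_eq_mul]; ring
  have hkr : (k : ℝ) * r ≤ (k : ℝ) * ε := mul_le_mul_of_nonneg_left hrε.le (Nat.cast_nonneg k)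
  have hs4 : ‖s‖ ≤ 1 / 4 := by nlinarith [norm_nonneg s]
  -- 1 + s is invertible
  have h1s : (1 : ℝ) - ‖s‖ ≤ ‖1 + s‖ := by
    have h3 := norm_sub_le (1 + s) s
    simp only [add_sub_cancel_right, norm_one] at h3
    linarith
  have h1s2 : (1 : ℝ) / 2 ≤ ‖1 + s‖ := by linarith
  have hne : (1 : ℂ) + s ≠ 0 := by
    intro h0
    rw [h0, norm_zero] at h1s2
    linarith
  have hinv : ‖((1 : ℂ) + s)⁻¹‖ ≤ 2 := by
    rw [norm_inv]
    calc ‖(1 : ℂ) + s‖⁻¹ ≤ ((1 : ℝ) / 2)⁻¹ := by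
          apply inv_anti₀ (by norm_num) h1s2
      _ = 2 := by norm_num
  -- norm of Gmat - 1
  have hGentry : ∀ i j : Fin (k + 1), ‖(Gmat k h - 1) i j‖ ≤ t := by
    intro i j
    rw [Matrix.sub_apply]
    by_cases hij : i = j
    · subst hij
      have hG : Gmat k h i i = 1 := by simp [Gmat]
      rw [hG, Matrix.one_apply_eq, sub_self, norm_zero]
      exact ht0
    · rw [Matrix.one_apply_ne hij, sub_zero]
      by_cases hj : j = 0
      · subst hj
        have hi : i ≠ 0 := hij
        have hG : Gmat k h i 0 = h (i.pred hi) := by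
          simp [Gmat, hij, hi]
        rw [hG]
        exact hht _
      · have hG : Gmat k h i j = 0 := by
          simp [Gmat, hij, hj]
        rw [hG, norm_zero]
        exact ht0
  have hG1 : ‖Gmat k h - 1‖ ≤ c ^ 2 * t := by
    refine le_trans (l2_norm_le_sum _) ?_
    calc ∑ i, ∑ j, ‖(Gmat k h - 1) i j‖ ≤ ∑ _i : Fin (k+1), ∑ _j : Fin (k+1), t :=
          Finset.sum_le_sum fun i _ => Finset.sum_le_sum fun j _ => hGentry i j
      _ = c ^ 2 * t := by
          simp [Finset.sum_const, Finset.card_univ, hc_def]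
          push_cast; ring
  -- norm of 1
  have hone : ‖(1 : Matrix (Fin (k+1)) (Fin (k+1)) ℂ)‖ ≤ c := by
    refine le_trans (l2_norm_le_sum _) ?_
    have h1e : ∀ i j : Fin (k+1), ‖(1 : Matrix (Fin (k+1)) (Fin (k+1)) ℂ) i j‖
        = if i = j then 1 else 0 := by
      intro i j
      by_cases hij : i = j
      · subst hij; rw [Matrix.one_apply_eq, if_pos rfl]; exact norm_one
      · rw [Matrix.one_apply_ne hij, if_neg hij, norm_zero]
    have hsum : ∀ i : Fin (k+1), ∑ j, ‖(1 : Matrix (Fin (k+1)) (Fin (k+1)) ℂ) i j‖ = 1 := by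
      intro i
      rw [Finset.sum_congr rfl fun j _ => h1e i j]
      simp
    rw [Finset.sum_congr rfl fun i _ => hsum i]
    simp [hc_def]
  have hGnorm : ‖Gmat k h‖ ≤ c + c ^ 2 * t := by
    have : Gmat k h = 1 + (Gmat k h - 1) := by abel
    rw [this]
    exact le_trans (norm_add_le _ _) (add_le_add hone hG1)
  -- key algebraic identity
  have key : A * Gmat k h - ((1 : ℂ) + s) • (1 : Matrix (Fin (k+1)) (Fin (k+1)) ℂ)
      = (A - 1) * Gmat k h + (Gmat k h - 1) - s • 1 := by
    rw [sub_mul, one_mul, add_smul, one_smul]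
    abel
  have main_eq : ((1 : ℂ) + s)⁻¹ • (A * Gmat k h) - 1
      = ((1 : ℂ) + s)⁻¹ • (A * Gmat k h - ((1 : ℂ) + s) • 1) := by
    rw [smul_sub, smul_smul, inv_mul_cancel₀ hne, one_smul]
  -- norm bounds for the three pieces
  have hAG : ‖(A - 1) * Gmat k h‖ ≤ r * (c + c ^ 2 * t) :=
    le_trans (Matrix.l2_opNorm_mul _ _) (mul_le_mul_of_nonneg_left hGnorm hr0)
  have hsm : ‖s • (1 : Matrix (Fin (k+1)) (Fin (k+1)) ℂ)‖ ≤ (k : ℝ) * r * t * c := by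
    rw [norm_smul]
    exact mul_le_mul hs hone (norm_nonneg _) (by positivity)
  -- put it together
  rw [main_eq, key, norm_smul]
  have htri : ‖(A - 1) * Gmat k h + (Gmat k h - 1) - s • (1 : Matrix (Fin (k+1)) (Fin (k+1)) ℂ)‖
      ≤ r * (c + c ^ 2 * t) + c ^ 2 * t + (k : ℝ) * r * t * c := by
    calc ‖(A - 1) * Gmat k h + (Gmat k h - 1) - s • (1 : Matrix (Fin (k+1)) (Fin (k+1)) ℂ)‖
        ≤ ‖(A - 1) * Gmat k h + (Gmat k h - 1)‖ + ‖s • (1 : Matrix (Fin (k+1)) (Fin (k+1)) ℂ)‖ :=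
          norm_sub_le _ _
      _ ≤ (‖(A - 1) * Gmat k h‖ + ‖Gmat k h - 1‖) + ‖s • (1 : Matrix (Fin (k+1)) (Fin (k+1)) ℂ)‖ :=
          add_le_add_left (norm_add_le _ _) _
      _ ≤ r * (c + c ^ 2 * t) + c ^ 2 * t + (k : ℝ) * r * t * c := by
          exact add_le_add (add_le_add hAG hG1) hsm
  calc ‖((1 : ℂ) + s)⁻¹‖ * ‖(A - 1) * Gmat k h + (Gmat k h - 1) - s • (1 : Matrix (Fin (k+1)) (Fin (k+1)) ℂ)‖
      ≤ 2 * (r * (c + c ^ 2 * t) + c ^ 2 * t + (k : ℝ) * r * t * c) :=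
        mul_le_mul hinv htri (norm_nonneg _) (by norm_num)
    _ ≤ 6 * c ^ 2 * (r + t) := by
        have e1 : r * c ≤ r * c ^ 2 := by
          nlinarith [mul_nonneg (mul_nonneg hr0 hc0) (sub_nonneg.2 hc)]
        have e2 : r * c ^ 2 * t ≤ r * c ^ 2 * (1 / 2) :=
          mul_le_mul_of_nonneg_left ht2 (by positivity)
        have e3 : (k : ℝ) * r * t * c ≤ c ^ 2 * (r * t) := by
          nlinarith [mul_nonneg (mul_nonneg hr0 ht0) hc0, sub_nonneg.2 hkc,
            mul_nonneg (mul_nonneg (mul_nonneg hr0 ht0) hc0) (sub_nonneg.2 hkc)]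
        have e4 : c ^ 2 * (r * t) ≤ c ^ 2 * (r * (1 / 2)) := by
          apply mul_le_mul_of_nonneg_left _ (by positivity)
          exact mul_le_mul_of_nonneg_left ht2 hr0
        have h5 : (0 : ℝ) ≤ r * c ^ 2 := by positivity
        have h6 : (0 : ℝ) ≤ t * c ^ 2 := by positivity
        clear_value c r t s ε
        linarith [e1, e2, e3, e4, h5, h6]
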